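/- Let V be a finite Borel measure on (0,∞), let ε, c, c₁, c₂ ∈ (0, 𝓛_V(0)) with c₁ < c₂, and set α = √(τ_V(c)·λ_V(c)). Then: (i) for every A > 0, (α/(α+A)) · T_V(c + (A+α)/(A·e^{Aα})) ≤ τ_V(c) ≤ T_V(c/(1+c)); and (ii) for every B > 0, T_V(c₁ + c₂·e^{−T_V(ε)·λ_V(c₁)} + 2ε·e^{−B}) ≤ T_V(ε) + 2B/λ_V(c₂). -/

import Mathlib

open MeasureTheory Filter Set Topology

/-- The Laplace transform `𝓛_V(t) = ∫_{(0,∞)} e^{-tλ} dV(λ)` of a (finite Borel) measure `V`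
on `(0,∞)`. -/
noncomputable def lap (V : Measure ℝ) (t : ℝ) : ℝ :=
  ∫ x in Ioi (0 : ℝ), Real.exp (-t * x) ∂V

/-- `V(λ) = V((0,λ])`, the nondecreasing right-continuous function associated to `V`. -/
noncomputable def cdfV (V : Measure ℝ) (l : ℝ) : ℝ :=
  (V (Ioc 0 l)).toReal

/-- The mixing time `T_V(ε) = min{t ≥ 0 : 𝓛_V(t) ≤ ε}`. -/
noncomputable def TmixV (V : Measure ℝ) (ε : ℝ) : ℝ :=
  sInf {t : ℝ | 0 ≤ t ∧ lap V t ≤ ε}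

/-- `λ_V(c) = inf{λ > 0 : V(λ) > c}`. -/
noncomputable def lamV (V : Measure ℝ) (c : ℝ) : ℝ :=
  sInf {l : ℝ | 0 < l ∧ c < cdfV V l}

/-- `τ_V(c) = sup_{λ ≥ λ_V(c)} log(1 + V(λ))/λ`. -/
noncomputable def tauV (V : Measure ℝ) (c : ℝ) : ℝ :=
  sSup ((fun l => Real.log (1 + cdfV V l) / l) '' Ici (lamV V c))

/-- `t` is a cutoff time for the sequence of Laplace transforms `(𝓛_{V_n})` (in the regime
`𝓛_{V_n}(0) → ∞`): `𝓛_{V_n}(a t_n) → 0` for `a > 1` and `𝓛_{V_n}(a t_n) → ∞` for `0 < a < 1`. -/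
def IsLapCutoffTime (V : ℕ → Measure ℝ) (t : ℕ → ℝ) : Prop :=
  (∀ᶠ n in atTop, 0 < t n) ∧
    (∀ a : ℝ, 1 < a → Tendsto (fun n => lap (V n) (a * t n)) atTop (𝓝 0)) ∧
    (∀ a : ℝ, a ∈ Ioo (0 : ℝ) 1 → Tendsto (fun n => lap (V n) (a * t n)) atTop atTop)

/-- The sequence of Laplace transforms `(𝓛_{V_n})` has a cutoff. -/
def LapCutoff (V : ℕ → Measure ℝ) : Prop :=
  ∃ t : ℕ → ℝ, IsLapCutoffTime V t

set_option linter.unusedSectionVars false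
set_option linter.unusedVariables false
set_option linter.unusedTactic false
set_option maxHeartbeats 1000000

open scoped ENNReal

section Aux

lemma exp_int_Ioi (a b : ℝ) (hb : 0 < b) :
    ∫ s in Ioi a, b * Real.exp (-b * s) = Real.exp (-b * a) := by
  have hderiv : ∀ x ∈ Ici a, HasDerivAt (fun s => -Real.exp (-b * s)) (b * Real.exp (-b * x)) x := by
    intro x _
    have h := (((hasDerivAt_id x).const_mul (-b)).exp).neg
    simp only [id] at h
    refine (h : HasDerivAt (fun s => -Real.exp (-b * s)) _ x).congr_deriv ?_; ring
  have hint : IntegrableOn (fun x => b * Real.exp (-b * x)) (Ioi a) :=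
    (exp_neg_integrableOn_Ioi a hb).const_mul b
  have htend : Tendsto (fun s => -Real.exp (-b * s)) atTop (𝓝 (0:ℝ)) := by
    rw [show (0:ℝ) = -0 by ring]
    refine Tendsto.neg (Real.tendsto_exp_atBot.comp ?_)
    have h1 : Tendsto (fun s : ℝ => b * s) atTop atTop := tendsto_id.const_mul_atTop hb
    have h2 : Tendsto (fun s : ℝ => -(b * s)) atTop atBot := tendsto_neg_atBot_iff.mpr h1
    exact h2.congr (fun s => by ring)
  have := integral_Ioi_of_hasDerivAt_of_tendsto' hderiv hint htend
  rw [this]; simp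


variable (V : Measure ℝ) [IsFiniteMeasure V]


lemma lap_int {t : ℝ} (ht : 0 ≤ t) : IntegrableOn (fun x => Real.exp (-t * x)) (Ioi 0) V := by
  refine (integrable_const (1:ℝ)).mono' ((Real.continuous_exp.comp (continuous_const.mul continuous_id)).aestronglyMeasurable) ?_
  refine (ae_restrict_iff' measurableSet_Ioi).mpr (ae_of_all _ fun x hx => ?_)
  rw [Real.norm_eq_abs, abs_of_pos (Real.exp_pos _), Real.exp_le_one_iff]
  have : (0:ℝ) < x := hx
  nlinarith

lemma lap_nonneg (t : ℝ) : 0 ≤ lap V t :=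
  integral_nonneg fun x => (Real.exp_pos _).le

lemma lap_anti {s t : ℝ} (hs : 0 ≤ s) (hst : s ≤ t) : lap V t ≤ lap V s := by
  refine setIntegral_mono_on (lap_int V (hs.trans hst)) (lap_int V hs) measurableSet_Ioi fun x hx => ?_
  have : (0:ℝ) < x := hx
  apply Real.exp_le_exp.mpr; nlinarith

lemma lap_tendsto_zero : Tendsto (fun n : ℕ => lap V n) atTop (𝓝 0) := by
  have h0 : (0:ℝ) = ∫ x in Ioi (0:ℝ), (0:ℝ) ∂V := by simp
  rw [h0]
  refine tendsto_integral_of_dominated_convergence (fun _ => (1:ℝ))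
    (fun n => ((Real.continuous_exp.comp (continuous_const.mul continuous_id)).aestronglyMeasurable))
    (integrable_const _) (fun n => (ae_restrict_iff' measurableSet_Ioi).mpr (ae_of_all _ fun x hx => ?_))
    ((ae_restrict_iff' measurableSet_Ioi).mpr (ae_of_all _ fun x hx => ?_))
  · rw [Real.norm_eq_abs, abs_of_pos (Real.exp_pos _), Real.exp_le_one_iff]
    have : (0:ℝ) < x := hx
    have : (0:ℝ) ≤ (n:ℝ) := n.cast_nonneg
    nlinarith
  · have hx' : (0:ℝ) < x := hx
    refine Real.tendsto_exp_atBot.comp ?_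
    have : Tendsto (fun n : ℕ => (n:ℝ) * x) atTop atTop :=
      Tendsto.atTop_mul_const hx' tendsto_natCast_atTop_atTop
    simpa [neg_mul] using tendsto_neg_atBot_iff.mpr this

lemma Tmix_nonneg (ε : ℝ) : 0 ≤ TmixV V ε :=
  Real.sInf_nonneg fun _ hx => hx.1

lemma Tmix_le {t ε : ℝ} (ht : 0 ≤ t) (h : lap V t ≤ ε) : TmixV V ε ≤ t :=
  csInf_le ⟨0, fun _ hx => hx.1⟩ ⟨ht, h⟩

lemma Tmix_set_nonempty {ε : ℝ} (hε : 0 < ε) : {t : ℝ | 0 ≤ t ∧ lap V t ≤ ε}.Nonempty := by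
  obtain ⟨n, hn⟩ := (Filter.eventually_atTop.mp ((lap_tendsto_zero V).eventually_le_const hε)).imp
    (fun n h => h n le_rfl)
  exact ⟨n, n.cast_nonneg, hn⟩

lemma lap_Tmix_le {ε : ℝ} (hε : 0 < ε) : lap V (TmixV V ε) ≤ ε := by
  set m := TmixV V ε with hm
  have hm0 : 0 ≤ m := Tmix_nonneg V ε
  have key : ∀ s, m < s → lap V s ≤ ε := by
    intro s hs
    obtain ⟨t, ht, hts⟩ := (csInf_lt_iff ⟨0, fun _ hx => hx.1⟩ (Tmix_set_nonempty V hε)).mp hs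
    exact (lap_anti V ht.1 hts.le).trans ht.2
  have htend : Tendsto (fun n : ℕ => lap V (m + 1/(n+1))) atTop (𝓝 (lap V m)) := by
    refine tendsto_integral_of_dominated_convergence (fun x => Real.exp (-m * x))
      (fun n => ((Real.continuous_exp.comp (continuous_const.mul continuous_id)).aestronglyMeasurable))
      (lap_int V hm0) (fun n => (ae_restrict_iff' measurableSet_Ioi).mpr (ae_of_all _ fun x hx => ?_))
      ((ae_restrict_iff' measurableSet_Ioi).mpr (ae_of_all _ fun x hx => ?_))
    · rw [Real.norm_eq_abs, abs_of_pos (Real.exp_pos _), Real.exp_le_exp]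
      have hx' : (0:ℝ) < x := hx
      have h1 : (0:ℝ) < 1/((n:ℝ)+1) := by positivity
      nlinarith
    · have : Tendsto (fun n : ℕ => m + 1/((n:ℝ)+1)) atTop (𝓝 (m + 0)) :=
        tendsto_const_nhds.add (tendsto_one_div_add_atTop_nhds_zero_nat)
      rw [add_zero] at this
      have hc : Continuous fun t : ℝ => Real.exp (-t * x) :=
        Real.continuous_exp.comp ((continuous_id.neg).mul continuous_const)
      exact (hc.tendsto m).comp this
  refine le_of_tendsto htend (Eventually.of_forall fun n => key _ ?_)
  have : (0:ℝ) < 1/((n:ℝ)+1) := by positivity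
  linarith

lemma lap_zero : lap V 0 = (V (Ioi 0)).toReal := by
  simp [lap, measureReal_def]

lemma cdf_mono {l l' : ℝ} (h : l ≤ l') : cdfV V l ≤ cdfV V l' :=
  ENNReal.toReal_mono (measure_ne_top V _) (measure_mono (Ioc_subset_Ioc_right h))

lemma cdf_nonneg (l : ℝ) : 0 ≤ cdfV V l := ENNReal.toReal_nonneg

lemma lam_bddBelow (c : ℝ) : BddBelow {l : ℝ | 0 < l ∧ c < cdfV V l} :=
  ⟨0, fun _ hx => hx.1.le⟩

lemma lam_set_nonempty {c : ℝ} (hclt : c < lap V 0) :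
    {l : ℝ | 0 < l ∧ c < cdfV V l}.Nonempty := by
  have hU : (⋃ n : ℕ, Ioc (0:ℝ) (n+1)) = Ioi 0 := by
    ext x
    simp only [mem_iUnion, mem_Ioc, mem_Ioi]
    constructor
    · rintro ⟨n, h1, _⟩; exact h1
    · intro hx
      obtain ⟨n, hn⟩ := exists_nat_ge x
      exact ⟨n, hx, by push_cast; linarith⟩
  have hmono : Monotone fun n : ℕ => Ioc (0:ℝ) (n+1) := by
    intro a b hab
    exact Ioc_subset_Ioc_right (by push_cast; exact_mod_cast by exact_mod_cast add_le_add_left (Nat.cast_le.mpr hab) 1)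
  have ht : Tendsto (fun n : ℕ => V (Ioc (0:ℝ) (n+1))) atTop (𝓝 (V (Ioi 0))) := by
    have := tendsto_measure_iUnion_atTop (μ := V) hmono
    rwa [hU] at this
  have ht2 : Tendsto (fun n : ℕ => cdfV V (n+1)) atTop (𝓝 ((V (Ioi 0)).toReal)) :=
    (ENNReal.tendsto_toReal (measure_ne_top V _)).comp ht
  rw [← lap_zero] at ht2
  obtain ⟨n, hn⟩ := (ht2.eventually_const_lt hclt).exists
  exact ⟨(n:ℝ)+1, by positivity, hn⟩

lemma tendsto_cdf_zero : Tendsto (fun n : ℕ => cdfV V (1/(n+1))) atTop (𝓝 0) := by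
  have hI : (⋂ n : ℕ, Ioc (0:ℝ) (1/(n+1))) = ∅ := by
    ext x
    simp only [mem_iInter, mem_Ioc, mem_empty_iff_false, iff_false, not_forall]
    by_cases hx : 0 < x
    · obtain ⟨n, hn⟩ := exists_nat_one_div_lt hx
      exact ⟨n, fun h => absurd h.2 (by push_cast at hn ⊢; linarith)⟩
    · exact ⟨0, fun h => hx h.1⟩
  have hanti : Antitone fun n : ℕ => Ioc (0:ℝ) (1/(n+1)) := by
    intro a b hab
    refine Ioc_subset_Ioc_right (by
      apply one_div_le_one_div_of_le (by positivity)
      push_cast; exact_mod_cast add_le_add_left (Nat.cast_le.mpr hab) 1)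
  have ht : Tendsto (fun n : ℕ => V (Ioc (0:ℝ) (1/(n+1)))) atTop (𝓝 (V (⋂ n : ℕ, Ioc (0:ℝ) (1/(n+1))))) :=
    tendsto_measure_iInter_atTop (fun n => (measurableSet_Ioc).nullMeasurableSet) hanti ⟨0, measure_ne_top V _⟩
  rw [hI, measure_empty] at ht
  have := (ENNReal.tendsto_toReal (by simp)).comp ht
  simpa [cdfV, Function.comp_def] using this

lemma lamV_pos {c : ℝ} (hc : 0 < c) (hclt : c < lap V 0) : 0 < lamV V c := by
  obtain ⟨n, hn⟩ := ((tendsto_cdf_zero V).eventually_lt_const hc).exists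
  have hlb : ∀ l ∈ {l : ℝ | 0 < l ∧ c < cdfV V l}, 1/((n:ℝ)+1) ≤ l := by
    intro l hl
    by_contra h
    push_neg at h
    exact absurd (lt_of_lt_of_le hl.2 (cdf_mono V h.le)) (not_lt.mpr hn.le)
  have := le_csInf (lam_set_nonempty V hclt) hlb
  calc (0:ℝ) < 1/((n:ℝ)+1) := by positivity
  _ ≤ lamV V c := this

lemma cdf_le_of_lt_lam {c l : ℝ} (hl : 0 < l) (hll : l < lamV V c) : cdfV V l ≤ c := by
  by_contra h
  push_neg at h
  exact absurd (csInf_le (lam_bddBelow V c) ⟨hl, h⟩) (not_le.mpr hll)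

lemma lt_cdf_of_lam_lt {c l : ℝ} (hclt : c < lap V 0) (hll : lamV V c < l) : c < cdfV V l := by
  obtain ⟨l', hl', hl'l⟩ := (csInf_lt_iff (lam_bddBelow V c) (lam_set_nonempty V hclt)).mp hll
  exact hl'.2.trans_le (cdf_mono V hl'l.le)

lemma cdf_lam_ge {c : ℝ} (hclt : c < lap V 0) : c ≤ cdfV V (lamV V c) := by
  set m := lamV V c
  have hI : (⋂ n : ℕ, Ioc (0:ℝ) (m + 1/(n+1))) = Ioc 0 m := by
    ext x
    simp only [mem_iInter, mem_Ioc]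
    constructor
    · rintro h
      refine ⟨(h 0).1, ?_⟩
      by_contra hx
      push_neg at hx
      obtain ⟨n, hn⟩ := exists_nat_one_div_lt (sub_pos.mpr hx)
      have := (h n).2
      push_cast at hn this ⊢
      linarith
    · rintro ⟨h1, h2⟩ n
      have : (0:ℝ) < 1/((n:ℝ)+1) := by positivity
      exact ⟨h1, by linarith⟩
  have hanti : Antitone fun n : ℕ => Ioc (0:ℝ) (m + 1/(n+1)) := by
    intro a b hab
    refine Ioc_subset_Ioc_right (by
      have : 1/((b:ℝ)+1) ≤ 1/((a:ℝ)+1) := by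
        apply one_div_le_one_div_of_le (by positivity)
        exact_mod_cast add_le_add_left (Nat.cast_le.mpr hab) 1
      linarith)
  have ht : Tendsto (fun n : ℕ => V (Ioc (0:ℝ) (m + 1/(n+1)))) atTop (𝓝 (V (Ioc 0 m))) := by
    have := tendsto_measure_iInter_atTop (μ := V) (fun n => (measurableSet_Ioc).nullMeasurableSet) hanti ⟨0, measure_ne_top V _⟩
    rwa [hI] at this
  have ht2 : Tendsto (fun n : ℕ => cdfV V (m + 1/(n+1))) atTop (𝓝 (cdfV V m)) :=
    (ENNReal.tendsto_toReal (measure_ne_top V _)).comp ht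
  refine ge_of_tendsto ht2 (Eventually.of_forall fun n => ?_)
  refine (lt_cdf_of_lam_lt V hclt ?_).le
  have : (0:ℝ) < 1/((n:ℝ)+1) := by positivity
  linarith

lemma meas_Ioo_le {a c : ℝ} (ha : 0 < a) (hcnn : 0 ≤ c)
    (h : ∀ l, 0 < l → l < a → cdfV V l ≤ c) : (V (Ioo 0 a)).toReal ≤ c := by
  have hU : (⋃ n : ℕ, Ioc (0:ℝ) (a - a/(n+2))) = Ioo 0 a := by
    ext x
    simp only [mem_iUnion, mem_Ioc, mem_Ioo]
    constructor
    · rintro ⟨n, h1, h2⟩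
      refine ⟨h1, lt_of_le_of_lt h2 ?_⟩
      have : (0:ℝ) < a/((n:ℝ)+2) := by positivity
      linarith
    · rintro ⟨h1, h2⟩
      obtain ⟨n, hn⟩ := exists_nat_one_div_lt (div_pos (show (0:ℝ) < a - x by linarith) ha)
      refine ⟨n+1, h1, ?_⟩
      have hn' : 1/((n:ℝ)+1) < (a-x)/a := hn
      have h3 : a/((n:ℝ)+1+2) ≤ a/((n:ℝ)+1) := by
        apply div_le_div_of_nonneg_left ha.le (by positivity) (by linarith)
      have h4 : a/((n:ℝ)+1) = a * (1/((n:ℝ)+1)) := by ring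
      have h5 : a * (1/((n:ℝ)+1)) < a * ((a-x)/a) := by
        apply mul_lt_mul_of_pos_left hn' ha
      have h6 : a * ((a-x)/a) = a - x := by field_simp
      push_cast
      push_cast at h3
      linarith
  have hmono : Monotone fun n : ℕ => Ioc (0:ℝ) (a - a/(n+2)) := by
    intro m n hmn
    refine Ioc_subset_Ioc_right ?_
    have : a/((n:ℝ)+2) ≤ a/((m:ℝ)+2) := by
      apply div_le_div_of_nonneg_left ha.le (by positivity)
      exact_mod_cast add_le_add_left (Nat.cast_le.mpr hmn) 2
    linarith
  have ht : Tendsto (fun n : ℕ => V (Ioc (0:ℝ) (a - a/(n+2)))) atTop (𝓝 (V (Ioo 0 a))) := by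
    have := tendsto_measure_iUnion_atTop (μ := V) hmono
    rwa [hU] at this
  have ht2 : Tendsto (fun n : ℕ => cdfV V (a - a/(n+2))) atTop (𝓝 ((V (Ioo 0 a)).toReal)) :=
    (ENNReal.tendsto_toReal (measure_ne_top V _)).comp ht
  refine le_of_tendsto ht2 (Eventually.of_forall fun n => ?_)
  rcases le_or_gt (a - a/(n+2)) 0 with hle | hpos
  · calc cdfV V (a - a/(n+2)) ≤ cdfV V 0 := cdf_mono V hle
    _ = 0 := by simp [cdfV]
    _ ≤ c := hcnn
  · refine h _ hpos ?_
    have : (0:ℝ) < a/((n:ℝ)+2) := by positivity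
    linarith

lemma tail_key {l₀ t τ : ℝ} (hl : 0 < l₀) (hτ : 0 < τ) (ht : τ < t)
    (hV : ∀ s, l₀ ≤ s → 1 + cdfV V s ≤ Real.exp (τ * s)) :
    ∫⁻ x in Ici l₀, ENNReal.ofReal (Real.exp (-t * x)) ∂V ≤
      ENNReal.ofReal (t / (t - τ) * Real.exp (-(t - τ) * l₀)) := by
  have ht0 : 0 < t := hτ.trans ht
  have httau : 0 < t - τ := sub_pos.mpr ht
  set F : ℝ → ℝ → ℝ≥0∞ := fun x s =>
    ({p : ℝ × ℝ | p.1 < p.2}).indicator (fun p => ENNReal.ofReal (t * Real.exp (-t * p.2))) (x, s)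
    with hF
  have hFmeas : Measurable (Function.uncurry F) := by
    refine Measurable.indicator ?_ (measurableSet_lt measurable_fst measurable_snd)
    exact (ENNReal.measurable_ofReal.comp
      ((continuous_const.mul (Real.continuous_exp.comp
        (continuous_const.mul continuous_id))).measurable.comp measurable_snd))
  have step1 : ∀ x : ℝ, ENNReal.ofReal (Real.exp (-t * x)) = ∫⁻ s, F x s := by
    intro x
    have hint : IntegrableOn (fun s => t * Real.exp (-t * s)) (Ioi x) :=
      (exp_neg_integrableOn_Ioi x ht0).const_mul t
    have h1 : ENNReal.ofReal (Real.exp (-t * x))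
        = ∫⁻ s in Ioi x, ENNReal.ofReal (t * Real.exp (-t * s)) := by
      rw [← exp_int_Ioi x t ht0]
      exact ofReal_integral_eq_lintegral_ofReal hint (ae_of_all _ fun s => by positivity)
    rw [h1, ← lintegral_indicator measurableSet_Ioi]
    congr 1
  have swap : ∫⁻ x in Ici l₀, ENNReal.ofReal (Real.exp (-t * x)) ∂V
      = ∫⁻ s, (∫⁻ x in Ici l₀, F x s ∂V) := by
    calc ∫⁻ x in Ici l₀, ENNReal.ofReal (Real.exp (-t * x)) ∂V
        = ∫⁻ x in Ici l₀, (∫⁻ s, F x s) ∂V := lintegral_congr fun x => step1 x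
      _ = ∫⁻ s, (∫⁻ x in Ici l₀, F x s ∂V) := lintegral_lintegral_swap hFmeas.aemeasurable
  rw [swap]
  -- inner evaluation and bound
  have inner_bound : ∀ s : ℝ, (∫⁻ x in Ici l₀, F x s ∂V) ≤
      (Ioi l₀).indicator (fun s => ENNReal.ofReal (t * Real.exp (-(t - τ) * s))) s := by
    intro s
    have heval : (∫⁻ x in Ici l₀, F x s ∂V)
        = ENNReal.ofReal (t * Real.exp (-t * s)) * V (Iio s ∩ Ici l₀) := by
      have : ∀ x : ℝ, F x s = (Iio s).indicator (fun _ => ENNReal.ofReal (t * Real.exp (-t * s))) x := by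
        intro x
        simp only [hF, Set.indicator, mem_setOf_eq, mem_Iio]
      calc (∫⁻ x in Ici l₀, F x s ∂V)
          = ∫⁻ x in Ici l₀, (Iio s).indicator (fun _ => ENNReal.ofReal (t * Real.exp (-t * s))) x ∂V :=
            lintegral_congr fun x => this x
        _ = ∫⁻ x in Iio s, ENNReal.ofReal (t * Real.exp (-t * s)) ∂(V.restrict (Ici l₀)) :=
            lintegral_indicator measurableSet_Iio _
        _ = ENNReal.ofReal (t * Real.exp (-t * s)) * (V.restrict (Ici l₀)) (Iio s) := by
            rw [setLIntegral_const]
        _ = ENNReal.ofReal (t * Real.exp (-t * s)) * V (Iio s ∩ Ici l₀) := by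
            rw [Measure.restrict_apply measurableSet_Iio]
    rw [heval]
    rcases le_or_gt s l₀ with hs | hs
    · have : Iio s ∩ Ici l₀ = ∅ := by
        ext x; simp only [mem_inter_iff, mem_Iio, mem_Ici, mem_empty_iff_false, iff_false, not_and, not_le]
        intro hx; linarith
      rw [this, measure_empty, mul_zero]
      exact zero_le
    · rw [indicator_of_mem (mem_Ioi.mpr hs)]
      have hsub : Iio s ∩ Ici l₀ ⊆ Ioc 0 s := by
        rintro x ⟨hx1, hx2⟩
        exact ⟨hl.trans_le hx2, le_of_lt hx1⟩
      have hVs : V (Iio s ∩ Ici l₀) ≤ ENNReal.ofReal (Real.exp (τ * s)) := by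
        refine (measure_mono hsub).trans ?_
        have : V (Ioc 0 s) = ENNReal.ofReal (cdfV V s) := (ENNReal.ofReal_toReal (measure_ne_top V _)).symm
        rw [this]
        refine ENNReal.ofReal_le_ofReal ?_
        have := hV s hs.le
        linarith
      calc ENNReal.ofReal (t * Real.exp (-t * s)) * V (Iio s ∩ Ici l₀)
          ≤ ENNReal.ofReal (t * Real.exp (-t * s)) * ENNReal.ofReal (Real.exp (τ * s)) :=
            mul_le_mul_right hVs _
        _ = ENNReal.ofReal (t * Real.exp (-t * s) * Real.exp (τ * s)) := by
            rw [← ENNReal.ofReal_mul (by positivity)]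
        _ = ENNReal.ofReal (t * Real.exp (-(t - τ) * s)) := by
            rw [mul_assoc, ← Real.exp_add, show -t * s + τ * s = -(t - τ) * s by ring]
  calc ∫⁻ s, (∫⁻ x in Ici l₀, F x s ∂V)
      ≤ ∫⁻ s, (Ioi l₀).indicator (fun s => ENNReal.ofReal (t * Real.exp (-(t - τ) * s))) s :=
        lintegral_mono inner_bound
    _ = ∫⁻ s in Ioi l₀, ENNReal.ofReal (t * Real.exp (-(t - τ) * s)) :=
        lintegral_indicator measurableSet_Ioi _
    _ = ENNReal.ofReal (∫ s in Ioi l₀, t * Real.exp (-(t - τ) * s)) := by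
        refine (ofReal_integral_eq_lintegral_ofReal ?_ (ae_of_all _ fun s => by positivity)).symm
        exact (exp_neg_integrableOn_Ioi l₀ httau).const_mul t
    _ = ENNReal.ofReal (t / (t - τ) * Real.exp (-(t - τ) * l₀)) := by
        congr 1
        have h2 : ∀ s : ℝ, t * Real.exp (-(t - τ) * s) = (t / (t - τ)) * ((t - τ) * Real.exp (-(t - τ) * s)) := by
          intro s; field_simp
        rw [show (fun s => t * Real.exp (-(t - τ) * s)) = fun s => (t / (t - τ)) * ((t - τ) * Real.exp (-(t - τ) * s)) from funext h2]
        rw [MeasureTheory.integral_const_mul, exp_int_Ioi l₀ (t - τ) httau]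

lemma tail_bound {l₀ t τ : ℝ} (hl : 0 < l₀) (hτ : 0 < τ) (ht : τ < t)
    (hV : ∀ s, l₀ ≤ s → 1 + cdfV V s ≤ Real.exp (τ * s)) :
    ∫ x in Ici l₀, Real.exp (-t * x) ∂V ≤ t / (t - τ) * Real.exp (-(t - τ) * l₀) := by
  have httau : 0 < t - τ := sub_pos.mpr ht
  have ht0 : 0 < t := hτ.trans ht
  have hRnn : (0:ℝ) ≤ t / (t - τ) * Real.exp (-(t - τ) * l₀) :=
    mul_nonneg (div_nonneg ht0.le httau.le) (Real.exp_pos _).le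
  have hmeas : AEStronglyMeasurable (fun x : ℝ => Real.exp (-t * x)) (V.restrict (Ici l₀)) :=
    (Real.continuous_exp.comp (continuous_const.mul continuous_id)).aestronglyMeasurable
  have h1 : ∫ x in Ici l₀, Real.exp (-t * x) ∂V
      = (∫⁻ x in Ici l₀, ENNReal.ofReal (Real.exp (-t * x)) ∂V).toReal := by
    rw [integral_eq_lintegral_of_nonneg_ae (ae_of_all _ fun x => (Real.exp_pos _).le) hmeas]
  rw [h1]
  calc (∫⁻ x in Ici l₀, ENNReal.ofReal (Real.exp (-t * x)) ∂V).toReal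
      ≤ (ENNReal.ofReal (t / (t - τ) * Real.exp (-(t - τ) * l₀))).toReal :=
        ENNReal.toReal_mono ENNReal.ofReal_ne_top (tail_key V hl hτ ht hV)
    _ = t / (t - τ) * Real.exp (-(t - τ) * l₀) := ENNReal.toReal_ofReal hRnn


end Aux

theorem stmt_9 (V : Measure ℝ) [IsFiniteMeasure V] (hsupp : V (Iic 0) = 0)
    (ε c c₁ c₂ : ℝ) (hε : 0 < ε) (hεlt : ε < lap V 0)
    (hc : 0 < c) (hclt : c < lap V 0)
    (hc₁ : 0 < c₁) (hc₁₂ : c₁ < c₂) (hc₂lt : c₂ < lap V 0) :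
    (∀ A > (0 : ℝ),
      Real.sqrt (tauV V c * lamV V c) / (Real.sqrt (tauV V c * lamV V c) + A) *
          TmixV V (c + (A + Real.sqrt (tauV V c * lamV V c)) /
            (A * Real.exp (A * Real.sqrt (tauV V c * lamV V c)))) ≤ tauV V c ∧
        tauV V c ≤ TmixV V (c / (1 + c))) ∧
      ∀ B > (0 : ℝ),
        TmixV V (c₁ + c₂ * Real.exp (-TmixV V ε * lamV V c₁) + 2 * ε * Real.exp (-B)) ≤
          TmixV V ε + 2 * B / lamV V c₂ := by
  
  have hM : ∀ l : ℝ, cdfV V l ≤ lap V 0 := by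
    intro l
    rw [lap_zero]
    exact ENNReal.toReal_mono (measure_ne_top V _) (measure_mono Ioc_subset_Ioi_self)
  constructor
  · -- Part (i)
    set l₀ := lamV V c with hl₀def
    have hl₀ : 0 < l₀ := lamV_pos V hc hclt
    have hbdd : BddAbove ((fun l => Real.log (1 + cdfV V l) / l) '' Ici l₀) := by
      refine ⟨Real.log (1 + lap V 0) / l₀, ?_⟩
      rintro y ⟨l, hl, rfl⟩
      have hl' : l₀ ≤ l := hl
      refine div_le_div₀ (Real.log_nonneg (by linarith [lap_nonneg V 0])) ?_ hl₀ hl'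
      have h1 : (0:ℝ) ≤ cdfV V l := cdf_nonneg V l
      exact Real.log_le_log (by linarith) (by linarith [hM l])
    have hτ_ge : ∀ l, l₀ ≤ l → Real.log (1 + cdfV V l) / l ≤ tauV V c := fun l hl =>
      le_csSup hbdd ⟨l, hl, rfl⟩
    have hcdf₀ : c ≤ cdfV V l₀ := cdf_lam_ge V hclt
    have hτpos : 0 < tauV V c := by
      have h1 : Real.log (1 + cdfV V l₀) / l₀ ≤ tauV V c := hτ_ge l₀ le_rfl
      have h2 : 0 < Real.log (1 + cdfV V l₀) := Real.log_pos (by linarith)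
      calc (0:ℝ) < Real.log (1 + cdfV V l₀) / l₀ := by positivity
        _ ≤ tauV V c := h1
    set τ := tauV V c with hτdef
    have hexp : ∀ s, l₀ ≤ s → 1 + cdfV V s ≤ Real.exp (τ * s) := by
      intro s hs
      have hs0 : 0 < s := hl₀.trans_le hs
      have h1 : Real.log (1 + cdfV V s) ≤ τ * s := by
        have h := hτ_ge s hs
        rw [div_le_iff₀ hs0] at h
        linarith
      have h2 : (0:ℝ) < 1 + cdfV V s := by linarith [cdf_nonneg V s]
      calc 1 + cdfV V s = Real.exp (Real.log (1 + cdfV V s)) := (Real.exp_log h2).symm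
        _ ≤ Real.exp (τ * s) := Real.exp_le_exp.mpr h1
    set α := Real.sqrt (τ * l₀) with hαdef
    have hα : 0 < α := Real.sqrt_pos.mpr (by positivity)
    have hα2 : α * α = τ * l₀ := Real.mul_self_sqrt (by positivity)
    -- right inequality
    have hεpos : 0 < c / (1 + c) := by positivity
    have hTnn : 0 ≤ TmixV V (c / (1 + c)) := Tmix_nonneg V _
    have hlapT : lap V (TmixV V (c / (1 + c))) ≤ c / (1 + c) := lap_Tmix_le V hεpos
    have hright : τ ≤ TmixV V (c / (1 + c)) := by
      refine Real.sSup_le ?_ hTnn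
      rintro y ⟨l, hl, rfl⟩
      have hl' : l₀ ≤ l := hl
      have hl0 : 0 < l := hl₀.trans_le hl'
      by_contra hcon
      push_neg at hcon
      set T := TmixV V (c / (1 + c)) with hTdef
      have hcl : c ≤ cdfV V l := hcdf₀.trans (cdf_mono V hl')
      have hVl0 : 0 < cdfV V l := hc.trans_le hcl
      have h1 : ∫ x in Ioc (0:ℝ) l, Real.exp (-T * x) ∂V ≤ lap V T := by
        refine setIntegral_mono_set (lap_int V hTnn) (ae_of_all _ fun x => (Real.exp_pos _).le) ?_
        exact HasSubset.Subset.eventuallyLE Ioc_subset_Ioi_self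
      have h2 : ∫ x in Ioc (0:ℝ) l, Real.exp (-T * l) ∂V
          ≤ ∫ x in Ioc (0:ℝ) l, Real.exp (-T * x) ∂V := by
        refine setIntegral_mono_on (integrableOn_const (measure_ne_top V _))
          ((lap_int V hTnn).mono_set Ioc_subset_Ioi_self) measurableSet_Ioc fun x hx => ?_
        exact Real.exp_le_exp.mpr (by nlinarith [hx.2])
      have h3 : ∫ x in Ioc (0:ℝ) l, Real.exp (-T * l) ∂V = cdfV V l * Real.exp (-T * l) := by
        rw [setIntegral_const]
        rfl
      have h4 : cdfV V l * Real.exp (-T * l) ≤ c / (1 + c) := by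
        rw [← h3]
        exact (h2.trans h1).trans hlapT
      have h5 : Real.exp (-(Real.log (1 + cdfV V l))) < Real.exp (-T * l) := by
        apply Real.exp_lt_exp.mpr
        have h6 : T * l < Real.log (1 + cdfV V l) := by
          have := (lt_div_iff₀ hl0).mp hcon
          linarith [this]
        linarith
      have h6 : Real.exp (-(Real.log (1 + cdfV V l))) = 1 / (1 + cdfV V l) := by
        rw [Real.exp_neg, Real.exp_log (by linarith), one_div]
      have h7 : cdfV V l / (1 + cdfV V l) < c / (1 + c) := by
        calc cdfV V l / (1 + cdfV V l) = cdfV V l * (1 / (1 + cdfV V l)) := by ring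
          _ < cdfV V l * Real.exp (-T * l) := by
              rw [← h6]; exact mul_lt_mul_of_pos_left h5 hVl0
          _ ≤ c / (1 + c) := h4
      rw [div_lt_div_iff₀ (by positivity) (by positivity)] at h7
      nlinarith
    refine fun A hA => ⟨?_, hright⟩
    -- left inequality
    set t := (α + A) / α * τ with htdef
    have htgt : τ < t := by
      rw [htdef, div_mul_eq_mul_div, lt_div_iff₀ hα]
      nlinarith
    have ht0 : 0 < t := hτpos.trans htgt
    have httau : t - τ = A * τ / α := by
      rw [htdef]; field_simp; ring
    have hdisj : Disjoint (Ioo (0:ℝ) l₀) (Ici l₀) :=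
      Set.disjoint_left.mpr fun x hx hx' => absurd hx.2 (not_lt.mpr hx')
    have hIcisub : Ici l₀ ⊆ Ioi (0:ℝ) := fun x hx => lt_of_lt_of_le hl₀ hx
    have hsplit : lap V t = (∫ x in Ioo (0:ℝ) l₀, Real.exp (-t * x) ∂V)
        + ∫ x in Ici l₀, Real.exp (-t * x) ∂V := by
      rw [lap, ← Ioo_union_Ici_eq_Ioi hl₀]
      exact setIntegral_union hdisj measurableSet_Ici
        ((lap_int V ht0.le).mono_set Ioo_subset_Ioi_self)
        ((lap_int V ht0.le).mono_set hIcisub)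
    have hb1 : ∫ x in Ioo (0:ℝ) l₀, Real.exp (-t * x) ∂V ≤ c := by
      have h1 : ‖∫ x in Ioo (0:ℝ) l₀, Real.exp (-t * x) ∂V‖ ≤ 1 * (V (Ioo 0 l₀)).toReal := by
        refine norm_setIntegral_le_of_norm_le_const (measure_lt_top V _)
          fun x hx => ?_
        rw [Real.norm_eq_abs, abs_of_pos (Real.exp_pos _)]
        exact Real.exp_le_one_iff.mpr (by nlinarith [hx.1])
      rw [Real.norm_eq_abs, one_mul] at h1
      have h2 : (V (Ioo (0:ℝ) l₀)).toReal ≤ c :=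
        meas_Ioo_le V hl₀ hc.le fun l ha hb => cdf_le_of_lt_lam V ha hb
      calc ∫ x in Ioo (0:ℝ) l₀, Real.exp (-t * x) ∂V
          ≤ |∫ x in Ioo (0:ℝ) l₀, Real.exp (-t * x) ∂V| := le_abs_self _
        _ ≤ (V (Ioo (0:ℝ) l₀)).toReal := h1
        _ ≤ c := h2
    have hb2 : ∫ x in Ici l₀, Real.exp (-t * x) ∂V ≤ (A + α) / (A * Real.exp (A * α)) := by
      refine (tail_bound V hl₀ hτpos htgt hexp).trans (le_of_eq ?_)
      have e1 : t / (t - τ) = (A + α) / A := by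
        rw [httau, htdef]; field_simp; ring
      have e2 : -(t - τ) * l₀ = -(A * α) := by
        rw [httau]
        field_simp
        nlinarith [hα2]
      rw [e1, e2, Real.exp_neg]
      field_simp
    have hlap : lap V t ≤ c + (A + α) / (A * Real.exp (A * α)) := by
      rw [hsplit]; linarith
    have hT : TmixV V (c + (A + α) / (A * Real.exp (A * α))) ≤ t := Tmix_le V ht0.le hlap
    have hfrac : (0:ℝ) ≤ α / (α + A) := by positivity
    calc α / (α + A) * TmixV V (c + (A + α) / (A * Real.exp (A * α)))
        ≤ α / (α + A) * t := mul_le_mul_of_nonneg_left hT hfrac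
      _ = τ := by rw [htdef]; field_simp
  · -- Part (ii)
    intro B hB
    set T := TmixV V ε with hTdef
    have hT0 : 0 ≤ T := Tmix_nonneg V ε
    have hlapT : lap V T ≤ ε := lap_Tmix_le V hε
    have hc₁lt : c₁ < lap V 0 := hc₁₂.trans hc₂lt
    have hc₂0 : 0 < c₂ := hc₁.trans hc₁₂
    set l₁ := lamV V c₁ with hl₁def
    set l₂ := lamV V c₂ with hl₂def
    have hl₁ : 0 < l₁ := lamV_pos V hc₁ hc₁lt
    have hl₂ : 0 < l₂ := lamV_pos V hc₂0 hc₂lt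
    have hl₁₂ : l₁ ≤ l₂ := by
      refine csInf_le_csInf (lam_bddBelow V c₁) (lam_set_nonempty V hc₂lt) ?_
      rintro l ⟨ha, hb⟩; exact ⟨ha, hc₁₂.trans hb⟩
    set S := T + 2 * B / l₂ with hSdef
    have hTS : T ≤ S := by
      have h : (0:ℝ) ≤ 2 * B / l₂ := by positivity
      rw [hSdef]
      linarith
    have hS0 : 0 ≤ S := hT0.trans hTS
    have hIci₁sub : Ici l₁ ⊆ Ioi (0:ℝ) := fun x hx => lt_of_lt_of_le hl₁ hx
    have hIci₂sub : Ici l₂ ⊆ Ioi (0:ℝ) := fun x hx => lt_of_lt_of_le hl₂ hx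
    have hdisj1 : Disjoint (Ioo (0:ℝ) l₁) (Ici l₁) :=
      Set.disjoint_left.mpr fun x hx hx' => absurd hx.2 (not_lt.mpr hx')
    have hdisj2 : Disjoint (Ico l₁ l₂) (Ici l₂) :=
      Set.disjoint_left.mpr fun x hx hx' => absurd hx.2 (not_lt.mpr hx')
    have hsplit1 : lap V S = (∫ x in Ioo (0:ℝ) l₁, Real.exp (-S * x) ∂V)
        + ∫ x in Ici l₁, Real.exp (-S * x) ∂V := by
      rw [lap, ← Ioo_union_Ici_eq_Ioi hl₁]
      exact setIntegral_union hdisj1 measurableSet_Ici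
        ((lap_int V hS0).mono_set Ioo_subset_Ioi_self)
        ((lap_int V hS0).mono_set hIci₁sub)
    have hsplit2 : ∫ x in Ici l₁, Real.exp (-S * x) ∂V
        = (∫ x in Ico l₁ l₂, Real.exp (-S * x) ∂V) + ∫ x in Ici l₂, Real.exp (-S * x) ∂V := by
      rw [← Ico_union_Ici_eq_Ici hl₁₂]
      exact setIntegral_union hdisj2 measurableSet_Ici
        ((lap_int V hS0).mono_set (fun x hx => lt_of_lt_of_le hl₁ hx.1))
        ((lap_int V hS0).mono_set hIci₂sub)
    have hb1 : ∫ x in Ioo (0:ℝ) l₁, Real.exp (-S * x) ∂V ≤ c₁ := by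
      have h1 : ‖∫ x in Ioo (0:ℝ) l₁, Real.exp (-S * x) ∂V‖ ≤ 1 * (V (Ioo 0 l₁)).toReal := by
        refine norm_setIntegral_le_of_norm_le_const (measure_lt_top V _)
          fun x hx => ?_
        rw [Real.norm_eq_abs, abs_of_pos (Real.exp_pos _)]
        exact Real.exp_le_one_iff.mpr (by nlinarith [hx.1])
      rw [Real.norm_eq_abs, one_mul] at h1
      have h2 : (V (Ioo (0:ℝ) l₁)).toReal ≤ c₁ :=
        meas_Ioo_le V hl₁ hc₁.le fun l ha hb => cdf_le_of_lt_lam V ha hb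
      calc ∫ x in Ioo (0:ℝ) l₁, Real.exp (-S * x) ∂V
          ≤ |∫ x in Ioo (0:ℝ) l₁, Real.exp (-S * x) ∂V| := le_abs_self _
        _ ≤ (V (Ioo (0:ℝ) l₁)).toReal := h1
        _ ≤ c₁ := h2
    have hb2 : ∫ x in Ico l₁ l₂, Real.exp (-S * x) ∂V ≤ c₂ * Real.exp (-T * l₁) := by
      have h1 : ‖∫ x in Ico l₁ l₂, Real.exp (-S * x) ∂V‖
          ≤ Real.exp (-S * l₁) * (V (Ico l₁ l₂)).toReal := by
        refine norm_setIntegral_le_of_norm_le_const (measure_lt_top V _)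
          fun x hx => ?_
        rw [Real.norm_eq_abs, abs_of_pos (Real.exp_pos _)]
        exact Real.exp_le_exp.mpr (by nlinarith [hx.1])
      rw [Real.norm_eq_abs] at h1
      have h2 : (V (Ico l₁ l₂)).toReal ≤ c₂ := by
        refine le_trans (ENNReal.toReal_mono (measure_ne_top V _) (measure_mono ?_))
          (meas_Ioo_le V hl₂ hc₂0.le fun l ha hb => cdf_le_of_lt_lam V ha hb)
        rintro x ⟨hx1, hx2⟩
        exact ⟨hl₁.trans_le hx1, hx2⟩
      have h3 : Real.exp (-S * l₁) ≤ Real.exp (-T * l₁) := Real.exp_le_exp.mpr (by nlinarith)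
      calc ∫ x in Ico l₁ l₂, Real.exp (-S * x) ∂V
          ≤ |∫ x in Ico l₁ l₂, Real.exp (-S * x) ∂V| := le_abs_self _
        _ ≤ Real.exp (-S * l₁) * (V (Ico l₁ l₂)).toReal := h1
        _ ≤ c₂ * Real.exp (-T * l₁) := by
            nlinarith [Real.exp_pos (-S * l₁), ENNReal.toReal_nonneg (a := V (Ico l₁ l₂))]
    have hb3 : ∫ x in Ici l₂, Real.exp (-S * x) ∂V ≤ 2 * ε * Real.exp (-B) := by
      have hstep : ∫ x in Ici l₂, Real.exp (-S * x) ∂V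
          ≤ ∫ x in Ici l₂, Real.exp (-(2 * B)) * Real.exp (-T * x) ∂V := by
        refine setIntegral_mono_on ((lap_int V hS0).mono_set hIci₂sub)
          (((lap_int V hT0).mono_set hIci₂sub).const_mul _) measurableSet_Ici fun x hx => ?_
        rw [← Real.exp_add]
        apply Real.exp_le_exp.mpr
        have hx' : l₂ ≤ x := hx
        have hkey : 2 * B ≤ 2 * B / l₂ * x := by
          rw [div_mul_eq_mul_div, le_div_iff₀ hl₂]
          nlinarith
        rw [hSdef]
        nlinarith
      rw [MeasureTheory.integral_const_mul] at hstep
      have h2 : ∫ x in Ici l₂, Real.exp (-T * x) ∂V ≤ lap V T :=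
        setIntegral_mono_set (lap_int V hT0) (ae_of_all _ fun x => (Real.exp_pos _).le)
          (HasSubset.Subset.eventuallyLE hIci₂sub)
      have h3 : ∫ x in Ici l₂, Real.exp (-S * x) ∂V ≤ Real.exp (-(2 * B)) * ε :=
        hstep.trans (by nlinarith [Real.exp_pos (-(2 * B)), lap_nonneg V T])
      refine h3.trans ?_
      have h4 : Real.exp (-(2 * B)) ≤ Real.exp (-B) := Real.exp_le_exp.mpr (by linarith)
      nlinarith [Real.exp_pos (-B)]
    have hlapS : lap V S ≤ c₁ + c₂ * Real.exp (-T * l₁) + 2 * ε * Real.exp (-B) := by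
      rw [hsplit1, hsplit2]
      linarith
    exact Tmix_le V hS0 hlapS
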